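/- arXiv:2401.15601 — 3 statements merged into one kernel-verified Lean document; each statement's English description precedes it below -/
import Mathlib

section
/- With g_K := g_{i_K;K} (the i_K-th column of G_K) and assuming each rational number (g_K, d_{(j)}·c_j)_{D_0R} (1 ≤ j ≤ K) is an integer: q^{(K)}(x^{g_K}) = x^{g_K}·∏_{j=1}^{K} L_j^{−(g_K, d_{(j)}·c_j)_{D_0R}}. -/
noncomputable section

/-- Variables of the ambient field of a generalized cluster algebra of rank `n` with
mutation degrees `r`: cluster variables `x_i`, coefficients `y_i`, and `z_{i,s}` for
`1 ≤ s ≤ r_i - 1` (encoded by `Fin (r i - 1)`, the variable `z i t` standing for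
`z_{i, t+1}`). -/
inductive GVar (n : ℕ) (r : Fin n → ℕ) : Type where
  | x : Fin n → GVar n r
  | y : Fin n → GVar n r
  | z : (i : Fin n) → Fin (r i - 1) → GVar n r

/-- The ambient field: rational functions over `ℚ` in the variables `GVar n r`. -/
abbrev GF (n : ℕ) (r : Fin n → ℕ) : Type := FractionRing (MvPolynomial (GVar n r) ℚ)

/-- The variable `x_i` as an element of the field `GF n r`. -/
def Xv {n : ℕ} {r : Fin n → ℕ} (i : Fin n) : GF n r :=
  algebraMap (MvPolynomial (GVar n r) ℚ) (GF n r) (MvPolynomial.X (GVar.x i))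

/-- The variable `y_i` as an element of the field `GF n r`. -/
def Yv {n : ℕ} {r : Fin n → ℕ} (i : Fin n) : GF n r :=
  algebraMap (MvPolynomial (GVar n r) ℚ) (GF n r) (MvPolynomial.X (GVar.y i))

/-- The variable `z_{i,s+1}` (for `s : Fin (r i - 1)`) as an element of `GF n r`. -/
def Zv {n : ℕ} {r : Fin n → ℕ} (i : Fin n) (s : Fin (r i - 1)) : GF n r :=
  algebraMap (MvPolynomial (GVar n r) ℚ) (GF n r) (MvPolynomial.X (GVar.z i s))

/-- A rational constant as an element of `GF n r`. -/
def Qc {n : ℕ} {r : Fin n → ℕ} (a : ℚ) : GF n r :=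
  algebraMap (MvPolynomial (GVar n r) ℚ) (GF n r) (MvPolynomial.C a)

/-- `z_{i,s}` for `0 ≤ s ≤ r i`, with the convention `z_{i,0} = z_{i,r_i} = 1`. -/
def Zc {n : ℕ} (r : Fin n → ℕ) (i : Fin n) (s : ℕ) : GF n r :=
  if h : 0 < s ∧ s < r i then Zv i ⟨s - 1, by omega⟩ else 1

/-- `x^v = ∏ x_i^{v_i}` for `v ∈ ℤ^n`. -/
def xpow {n : ℕ} (r : Fin n → ℕ) (v : Fin n → ℤ) : GF n r :=
  ∏ i, Xv (r := r) i ^ v i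

/-- `ŷ_i = y_i·∏_j x_j^{b_{ji}}`. -/
def yhat {n : ℕ} (r : Fin n → ℕ) (B : Matrix (Fin n) (Fin n) ℤ) (i : Fin n) : GF n r :=
  Yv i * ∏ j, Xv (r := r) j ^ B j i

/-- `ŷ^v = ∏ ŷ_i^{v_i}` for `v ∈ ℤ^n`. -/
def yhatpow {n : ℕ} (r : Fin n → ℕ) (B : Matrix (Fin n) (Fin n) ℤ) (v : Fin n → ℤ) :
    GF n r :=
  ∏ i, yhat r B i ^ v i

-- helpers
namespace Stmt13

lemma zpow_sum₀ {F : Type*} [Field F] {a : F} (ha : a ≠ 0) {ι : Type*} (s : Finset ι)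
    (f : ι → ℤ) : a ^ (∑ i ∈ s, f i) = ∏ i ∈ s, a ^ f i := by
  classical
  induction s using Finset.induction with
  | empty => simp
  | insert _ _ h ih => rw [Finset.sum_insert h, Finset.prod_insert h, zpow_add₀ ha, ih]

variable {n : ℕ} {r : Fin n → ℕ}

lemma gmap_inj :
    Function.Injective (algebraMap (MvPolynomial (GVar n r) ℚ) (GF n r)) :=
  IsFractionRing.injective _ _

lemma Xv_ne_zero (i : Fin n) : (Xv (r := r) i) ≠ 0 := by
  unfold Xv
  rw [map_ne_zero_iff _ gmap_inj]
  exact MvPolynomial.X_ne_zero _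

lemma Yv_ne_zero (i : Fin n) : (Yv (r := r) i) ≠ 0 := by
  unfold Yv
  rw [map_ne_zero_iff _ gmap_inj]
  exact MvPolynomial.X_ne_zero _

lemma xpow_ne_zero (v : Fin n → ℤ) : xpow r v ≠ 0 :=
  Finset.prod_ne_zero_iff.mpr fun i _ => zpow_ne_zero _ (Xv_ne_zero i)

lemma yhatpow_eq (B : Matrix (Fin n) (Fin n) ℤ) (w : Fin n → ℤ) :
    yhatpow r B w = (∏ i, Yv (r := r) i ^ w i) * xpow r (B.mulVec w) := by
  unfold yhatpow yhat xpow
  simp_rw [mul_zpow]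
  rw [Finset.prod_mul_distrib]
  congr 1
  simp_rw [← Finset.prod_zpow, ← zpow_mul]
  rw [Finset.prod_comm]
  refine Finset.prod_congr rfl fun j _ => ?_
  rw [show (B.mulVec w) j = ∑ i, B j i * w i from rfl, zpow_sum₀ (Xv_ne_zero j)]


lemma toNat_aux {R : ℕ} {c : ℤ} {s : ℕ} (hs : s ≤ R) :
    (0:ℤ) ≤ (R:ℤ) * max (-c) 0 + s * c := by
  rcases le_total c 0 with h|h
  · rw [max_eq_left (by linarith : (0:ℤ) ≤ -c)]
    have hs' : (s:ℤ) ≤ (R:ℤ) := by exact_mod_cast hs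
    nlinarith
  · have h1 : (0:ℤ) ≤ max (-c) 0 := le_max_right _ _
    have h2 : (0:ℤ) ≤ (s:ℤ) * c := by positivity
    positivity

lemma P_ne_zero (B₀ : Matrix (Fin n) (Fin n) ℤ) (k : Fin n) (w : Fin n → ℤ) (i₀ : Fin n)
    (hw : w i₀ ≠ 0) :
    (∑ s ∈ Finset.range (r k + 1), Zc r k s * yhatpow r B₀ w ^ s) ≠ 0 := by
  classical
  set R := r k with hR
  set a := B₀.mulVec w with ha
  set nx : ℕ → Fin n → ℕ := fun s i => ((R:ℤ) * max (-(a i)) 0 + s * a i).toNat with hnx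
  set ny : ℕ → Fin n → ℕ := fun s i => ((R:ℤ) * max (-(w i)) 0 + s * w i).toNat with hny
  have hnxc : ∀ s ≤ R, ∀ i, (nx s i : ℤ) = (R:ℤ) * max (-(a i)) 0 + s * a i :=
    fun s hs i => Int.toNat_of_nonneg (toNat_aux hs)
  have hnyc : ∀ s ≤ R, ∀ i, (ny s i : ℤ) = (R:ℤ) * max (-(w i)) 0 + s * w i :=
    fun s hs i => Int.toNat_of_nonneg (toNat_aux hs)
  set ζ : ℕ → MvPolynomial (GVar n r) ℚ := fun s =>
    if h : 0 < s ∧ s < r k then MvPolynomial.X (GVar.z k ⟨s-1, by omega⟩) else 1 with hζ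
  have hZc : ∀ s, Zc r k s = algebraMap (MvPolynomial (GVar n r) ℚ) (GF n r) (ζ s) := by
    intro s
    rw [Zc]
    simp only [hζ]
    split_ifs with h
    · rw [Zv]
    · rw [map_one]
  set Qp : MvPolynomial (GVar n r) ℚ := ∑ s ∈ Finset.range (R+1),
      ζ s * ((∏ i, MvPolynomial.X (GVar.x i) ^ nx s i)
        * ∏ i, MvPolynomial.X (GVar.y i) ^ ny s i) with hQp
  set U : GF n r := (∏ i, Xv (r := r) i ^ nx 0 i) * ∏ i, Yv (r := r) i ^ ny 0 i with hU
  have hUne : U ≠ 0 := by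
    apply mul_ne_zero <;>
      exact Finset.prod_ne_zero_iff.mpr fun i _ =>
        pow_ne_zero _ (by first | exact Xv_ne_zero i | exact Yv_ne_zero i)
  have claimA : algebraMap (MvPolynomial (GVar n r) ℚ) (GF n r) Qp
      = (∑ s ∈ Finset.range (R + 1), Zc r k s * yhatpow r B₀ w ^ s) * U := by
    rw [hQp, map_sum, Finset.sum_mul]
    refine Finset.sum_congr rfl fun s hs => ?_
    have hsR : s ≤ R := Nat.lt_succ_iff.mp (Finset.mem_range.mp hs)
    rw [map_mul, ← hZc, mul_assoc]
    congr 1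
    rw [map_mul, map_prod, map_prod]
    simp_rw [map_pow]
    have hx : ∀ i, algebraMap (MvPolynomial (GVar n r) ℚ) (GF n r)
        (MvPolynomial.X (GVar.x i)) = Xv (r := r) i := fun _ => rfl
    have hy : ∀ i, algebraMap (MvPolynomial (GVar n r) ℚ) (GF n r)
        (MvPolynomial.X (GVar.y i)) = Yv (r := r) i := fun _ => rfl
    simp_rw [hx, hy]
    rw [yhatpow_eq, hU, mul_pow]
    rw [show ((∏ i, Yv (r := r) i ^ w i) ^ s * xpow r a ^ s)
        * ((∏ i, Xv (r := r) i ^ nx 0 i) * ∏ i, Yv (r := r) i ^ ny 0 i)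
      = (xpow r a ^ s * ∏ i, Xv (r := r) i ^ nx 0 i)
        * ((∏ i, Yv (r := r) i ^ w i) ^ s * ∏ i, Yv (r := r) i ^ ny 0 i) by ring]
    congr 1
    · rw [xpow, ← Finset.prod_pow, ← Finset.prod_mul_distrib]
      refine Finset.prod_congr rfl fun i _ => ?_
      rw [← zpow_natCast (Xv (r := r) i ^ a i), ← zpow_mul,
        ← zpow_natCast (Xv (r := r) i) (nx 0 i), ← zpow_add₀ (Xv_ne_zero i),
        ← zpow_natCast (Xv (r := r) i) (nx s i)]
      congr 1
      rw [hnxc s hsR i, hnxc 0 (Nat.zero_le R) i]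
      push_cast
      ring
    · rw [← Finset.prod_pow, ← Finset.prod_mul_distrib]
      refine Finset.prod_congr rfl fun i _ => ?_
      rw [← zpow_natCast (Yv (r := r) i ^ w i), ← zpow_mul,
        ← zpow_natCast (Yv (r := r) i) (ny 0 i), ← zpow_add₀ (Yv_ne_zero i),
        ← zpow_natCast (Yv (r := r) i) (ny s i)]
      congr 1
      rw [hnyc s hsR i, hnyc 0 (Nat.zero_le R) i]
      push_cast
      ring
  -- the evaluation to single-variable polynomials
  set g : GVar n r → Polynomial ℚ := fun v =>
    match v with
    | GVar.y j => if j = i₀ then Polynomial.X else 1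
    | _ => 1 with hg
  set φ : MvPolynomial (GVar n r) ℚ →+* Polynomial ℚ :=
    MvPolynomial.eval₂Hom (algebraMap ℚ (Polynomial ℚ)) g with hφ
  have hφQp : φ Qp = ∑ s ∈ Finset.range (R+1), Polynomial.X ^ ny s i₀ := by
    rw [hQp, map_sum]
    refine Finset.sum_congr rfl fun s _ => ?_
    rw [map_mul, map_mul, map_prod, map_prod]
    have h1 : φ (ζ s) = 1 := by
      simp only [hζ]
      split_ifs with h
      · simp [hφ, hg]
      · exact map_one φ
    have h2 : (∏ i, φ (MvPolynomial.X (GVar.x i) ^ nx s i)) = 1 := by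
      refine Finset.prod_eq_one fun i _ => ?_
      rw [map_pow]
      simp [hφ, hg]
    have h3 : (∏ i, φ (MvPolynomial.X (GVar.y i) ^ ny s i)) = Polynomial.X ^ ny s i₀ := by
      simp_rw [map_pow]
      have hely : ∀ i, φ (MvPolynomial.X (GVar.y i)) = if i = i₀ then Polynomial.X else 1 := by
        intro i; simp [hφ, hg]
      simp_rw [hely]
      refine Finset.prod_eq_single i₀ (fun b _ hb => by rw [if_neg hb, one_pow])
        (fun h => absurd (Finset.mem_univ i₀) h) |>.trans (by rw [if_pos rfl])
    rw [h1, h2, h3, one_mul, one_mul]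
  have hQpne : Qp ≠ 0 := by
    intro h0
    have : (0 : Polynomial ℚ) = ∑ s ∈ Finset.range (R+1), Polynomial.X ^ ny s i₀ := by
      rw [← hφQp, h0, map_zero]
    have hcoeff := congrArg (fun p => Polynomial.coeff p (ny R i₀)) this
    simp only [Polynomial.coeff_zero, Polynomial.finset_sum_coeff,
      Polynomial.coeff_X_pow] at hcoeff
    rw [Finset.sum_eq_single R] at hcoeff
    · rw [if_pos rfl] at hcoeff; exact one_ne_zero hcoeff.symm
    · intro s hs hne
      rw [if_neg]
      intro heq
      have hsR : s ≤ R := Nat.lt_succ_iff.mp (Finset.mem_range.mp hs)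
      have : ((R:ℤ) * max (-(w i₀)) 0 + s * w i₀) = ((R:ℤ) * max (-(w i₀)) 0 + R * w i₀) := by
        rw [← hnyc s hsR i₀, ← hnyc R le_rfl i₀, heq]
      have hsw : (s : ℤ) * w i₀ = (R : ℤ) * w i₀ := by linarith
      have : (s : ℤ) = (R : ℤ) := mul_right_cancel₀ hw hsw
      exact hne (by exact_mod_cast this)
    · intro h; exact absurd (Finset.self_mem_range_succ R) h
  intro hsum
  apply hQpne
  apply gmap_inj
  rw [map_zero, claimA, hsum, zero_mul]

end Stmt13



/-- With `g_K = g_{i_K;K}` and the integers `hg j`, representing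
`(g_K, d_{(j)}·c_j)_{D₀R}`, the elements `L_j` are nonzero and
`q^{(K)}(x^{g_K}) = x^{g_K}·∏_{j=1}^{K} L_j^{-(g_K, d_{(j)}·c_j)_{D₀R}}`. -/
theorem stmt_13 (n K : ℕ) (hn : 1 ≤ n) (r : Fin n → ℕ) (hr : ∀ i, 0 < r i)
    (B₀ : Matrix (Fin n) (Fin n) ℤ)
    (D₀ : Fin n → ℤ) (hD₀ : ∀ i, 0 < D₀ i)
    (hskew : ∀ i j, D₀ i * (r i : ℤ) * B₀ i j = -(D₀ j * (r j : ℤ) * B₀ j i))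
    (idx : ℕ → Fin n) (ε : ℕ → ℤ)
    (hε : ∀ j < K, ε (j + 1) = 1 ∨ ε (j + 1) = -1)
    (B C G : ℕ → Matrix (Fin n) (Fin n) ℤ)
    (hB0 : B 0 = B₀) (hC0 : C 0 = 1) (hG0 : G 0 = 1)
    -- at each step the c-vector is nonzero and sign-coherent with common sign ε_j
    (hcv : ∀ j < K, (∃ l, C j l (idx (j + 1)) ≠ 0) ∧
      ∀ l, 0 ≤ ε (j + 1) * C j l (idx (j + 1)))
    (hB : ∀ j < K, ∀ (a b : Fin n),
      B (j + 1) a b =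
        if a = idx (j + 1) ∨ b = idx (j + 1) then -(B j a b)
        else B j a b + (r (idx (j + 1)) : ℤ) *
          (max (-(B j a (idx (j + 1)))) 0 * B j (idx (j + 1)) b
            + B j a (idx (j + 1)) * max (B j (idx (j + 1)) b) 0))
    (hC : ∀ j < K, ∀ (a b : Fin n),
      C (j + 1) a b =
        if b = idx (j + 1) then -(C j a b)
        else C j a b + (r (idx (j + 1)) : ℤ) *
          (C j a (idx (j + 1)) * max (ε (j + 1) * B j (idx (j + 1)) b) 0
            + max (-(ε (j + 1) * C j a (idx (j + 1)))) 0 * B j (idx (j + 1)) b))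
    (hG : ∀ j < K, ∀ (l i : Fin n),
      G (j + 1) l i =
        if i = idx (j + 1) then
          -(G j l i) + (r (idx (j + 1)) : ℤ) *
            ∑ p, max (-(ε (j + 1) * B j p (idx (j + 1)))) 0 * G j l p
        else G j l i)
    -- the rational numbers h_{i,j} = (e_i, d_{(j)}·c_j)_{D₀R} are integers
    (hfun : ℕ → Fin n → ℤ)
    (hfunint : ∀ j < K, ∀ i,
      hfun (j + 1) i * (D₀ (idx (j + 1)) * (r (idx (j + 1)) : ℤ)) =
        D₀ i * (r i : ℤ) * C j i (idx (j + 1)))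
    (q : ℕ → (GF n r →+* GF n r))
    (hq0 : ∀ j < K, ∀ a : ℚ, q (j + 1) (Qc a) = Qc a)
    (hqy : ∀ j < K, ∀ i, q (j + 1) (Yv i) = Yv i)
    (hqz : ∀ j < K, ∀ i s, q (j + 1) (Zv i s) = Zv i s)
    (hqx : ∀ j < K, ∀ i, q (j + 1) (Xv i) =
      Xv i * (∑ s ∈ Finset.range (r (idx (j + 1)) + 1),
        Zc r (idx (j + 1)) s *
          yhatpow r B₀ (fun m => ε (j + 1) * C j m (idx (j + 1))) ^ s) ^ (-(hfun (j + 1) i)))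
    (Q : ℕ → (GF n r →+* GF n r))
    (hQ0 : Q 0 = RingHom.id _)
    (hQ : ∀ j < K, Q (j + 1) = (Q j).comp (q (j + 1)))
    -- the rational numbers (ĉ_l⁺, d_{(j)}·c_j)_{D₀R} are integers `e l j`
    (e : ℕ → ℕ → ℤ)
    (he : ∀ l, 1 ≤ l → l ≤ K → ∀ j, 1 ≤ j → j ≤ l →
      e l j * (D₀ (idx j) * (r (idx j) : ℤ)) =
        ∑ m, B₀.mulVec (fun i => ε l * C (l - 1) i (idx l)) m *
          (D₀ m * (r m : ℤ)) * C (j - 1) m (idx j))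
    (L : ℕ → GF n r)
    (hL1 : L 1 = ∑ s ∈ Finset.range (r (idx 1) + 1),
      Zc r (idx 1) s * yhatpow r B₀ (fun i => ε 1 * C 0 i (idx 1)) ^ s)
    (hLl : ∀ l, 2 ≤ l → l ≤ K → L l = ∑ s ∈ Finset.range (r (idx l) + 1),
      Zc r (idx l) s * (yhatpow r B₀ (fun i => ε l * C (l - 1) i (idx l)) *
        ∏ j ∈ Finset.Icc 1 (l - 1), L j ^ (-(e l j))) ^ s)
    -- the rational numbers (g_K, d_{(j)}·c_j)_{D₀R} are integers `hg j`
    (hK : 1 ≤ K) (hg : ℕ → ℤ)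
    (hgint : ∀ j, 1 ≤ j → j ≤ K →
      hg j * (D₀ (idx j) * (r (idx j) : ℤ)) =
        ∑ m, G K m (idx K) * (D₀ m * (r m : ℤ)) * C (j - 1) m (idx j))
    : (∀ j, 1 ≤ j → j ≤ K → L j ≠ 0) ∧
    Q K (xpow r (fun m => G K m (idx K))) =
      xpow r (fun m => G K m (idx K)) * ∏ j ∈ Finset.Icc 1 K, L j ^ (-(hg j)) := by
  classical
  set w : ℕ → Fin n → ℤ := fun l m => ε l * C (l - 1) m (idx l) with hwdef
  set P : ℕ → GF n r := fun l => ∑ s ∈ Finset.range (r (idx l) + 1),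
    Zc r (idx l) s * yhatpow r B₀ (w l) ^ s with hPdef
  have hPne : ∀ l, 1 ≤ l → l ≤ K → P l ≠ 0 := by
    intro l h1 h2
    have hl : l - 1 + 1 = l := by omega
    obtain ⟨m, hm⟩ := (hcv (l - 1) (by omega)).1
    rw [hl] at hm
    have hεl : ε l ≠ 0 := by
      rcases hε (l - 1) (by omega) with h | h <;> rw [hl] at h <;> omega
    exact Stmt13.P_ne_zero B₀ (idx l) (w l) m (mul_ne_zero hεl hm)
  -- q in terms of P
  have hqx' : ∀ j < K, ∀ i, q (j + 1) (Xv (r := r) i)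
      = Xv i * P (j + 1) ^ (-(hfun (j + 1) i)) := by
    intro j hj i
    rw [hqx j hj i, hPdef]
    simp only [hwdef, Nat.add_sub_cancel]
  have hq_zpowX : ∀ j < K, ∀ i (c : ℤ), q (j + 1) (Xv (r := r) i ^ c)
      = Xv i ^ c * P (j + 1) ^ (-(c * hfun (j + 1) i)) := by
    intro j hj i c
    rw [map_zpow₀, hqx' j hj i, mul_zpow, ← zpow_mul]
    ring_nf
  have hq_xpow : ∀ j < K, ∀ v : Fin n → ℤ, q (j + 1) (xpow r v)
      = xpow r v * P (j + 1) ^ (-(∑ i, v i * hfun (j + 1) i)) := by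
    intro j hj v
    rw [xpow, map_prod]
    simp_rw [hq_zpowX j hj]
    rw [Finset.prod_mul_distrib, ← xpow, ← Finset.sum_neg_distrib,
      Stmt13.zpow_sum₀ (hPne (j + 1) (by omega) (by omega))]
  have hq_yhatpow : ∀ j < K, ∀ u : Fin n → ℤ, q (j + 1) (yhatpow r B₀ u)
      = yhatpow r B₀ u * P (j + 1) ^ (-(∑ m, B₀.mulVec u m * hfun (j + 1) m)) := by
    intro j hj u
    rw [Stmt13.yhatpow_eq, map_mul, hq_xpow j hj]
    have : q (j + 1) (∏ i, Yv (r := r) i ^ u i) = ∏ i, Yv (r := r) i ^ u i := by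
      rw [map_prod]
      refine Finset.prod_congr rfl fun i _ => ?_
      rw [map_zpow₀, hqy j hj i]
    rw [this]
    ring
  -- exponent identifications
  have hdpos : ∀ l, (0:ℤ) < D₀ (idx l) * (r (idx l) : ℤ) :=
    fun l => mul_pos (hD₀ _) (by exact_mod_cast hr _)
  have hE : ∀ j < K, ∀ l, j + 1 ≤ l → l ≤ K →
      (∑ m, B₀.mulVec (w l) m * hfun (j + 1) m) = e l (j + 1) := by
    intro j hj l h1 h2
    apply mul_right_cancel₀ (hdpos (j + 1)).ne'
    rw [he l (by omega) h2 (j + 1) (by omega) h1, Finset.sum_mul]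
    refine Finset.sum_congr rfl fun m _ => ?_
    rw [mul_assoc, hfunint j hj m, Nat.add_sub_cancel]
    ring
  have hHg : ∀ j < K, (∑ m, G K m (idx K) * hfun (j + 1) m) = hg (j + 1) := by
    intro j hj
    apply mul_right_cancel₀ (hdpos (j + 1)).ne'
    rw [hgint (j + 1) (by omega) (by omega), Finset.sum_mul]
    refine Finset.sum_congr rfl fun m _ => ?_
    rw [mul_assoc, hfunint j hj m, Nat.add_sub_cancel]
    ring
  -- Q fixes the z-variables
  have hQz : ∀ j, j ≤ K → ∀ i s, Q j (Zv i s) = Zv i s := by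
    intro j
    induction j with
    | zero => intro _ i s; rw [hQ0]; rfl
    | succ j ih =>
      intro hjK i s
      rw [hQ j (by omega), RingHom.comp_apply, hqz j (by omega), ih (by omega)]
  have hQZc : ∀ j, j ≤ K → ∀ k s, Q j (Zc r k s) = Zc r k s := by
    intro j hj k s
    rw [Zc]
    split_ifs
    · exact hQz j hj _ _
    · exact map_one _
  have hqZc : ∀ j < K, ∀ k s, q (j + 1) (Zc r k s) = Zc r k s := by
    intro j hj k s
    rw [Zc]
    split_ifs
    · exact hqz j hj _ _
    · exact map_one _
  -- main induction
  have main : ∀ j, j ≤ K →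
      (∀ l, j < l → l ≤ K → Q j (yhatpow r B₀ (w l)) =
        yhatpow r B₀ (w l) * ∏ j' ∈ Finset.Icc 1 j, L j' ^ (-(e l j'))) ∧
      (∀ j', 1 ≤ j' → j' ≤ j → L j' ≠ 0) ∧
      (Q j (xpow r (fun m => G K m (idx K))) =
        xpow r (fun m => G K m (idx K)) * ∏ j' ∈ Finset.Icc 1 j, L j' ^ (-(hg j'))) := by
    intro j
    induction j with
    | zero =>
      intro _
      rw [hQ0]
      exact ⟨fun l _ _ => by simp, fun j' h1 h2 => absurd h1 (by omega), by simp⟩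
    | succ j ih =>
      intro hjK
      have hjK' : j < K := by omega
      obtain ⟨ihy, ihL, ihx⟩ := ih (by omega)
      have hQP : Q j (P (j + 1)) = L (j + 1) := by
        rw [hPdef]
        simp only
        rw [map_sum]
        have hterm : ∀ s, Q j (Zc r (idx (j + 1)) s * yhatpow r B₀ (w (j + 1)) ^ s)
            = Zc r (idx (j + 1)) s *
              (yhatpow r B₀ (w (j + 1)) * ∏ j' ∈ Finset.Icc 1 j, L j' ^ (-(e (j + 1) j'))) ^ s := by
          intro s
          rw [map_mul, map_pow, hQZc j (by omega), ihy (j + 1) (by omega) (by omega)]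
        simp_rw [hterm]
        rcases Nat.eq_zero_or_pos j with hj0 | hj0
        · subst hj0
          rw [hL1]
          simp [hwdef]
        · rw [hLl (j + 1) (by omega) (by omega)]
          simp only [hwdef, Nat.add_sub_cancel]
      have hLne : L (j + 1) ≠ 0 := by
        rw [← hQP]
        exact (map_ne_zero_iff (Q j) (RingHom.injective _)).mpr
          (hPne (j + 1) (by omega) (by omega))
      refine ⟨?_, ?_, ?_⟩
      · intro l hl1 hl2
        rw [hQ j hjK', RingHom.comp_apply, hq_yhatpow j hjK' (w l), map_mul, map_zpow₀,
          hE j hjK' l (by omega) hl2, ihy l (by omega) hl2, hQP,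
          Finset.prod_Icc_succ_top (by omega : 1 ≤ j + 1)]
        ring
      · intro j' h1 h2
        rcases Nat.lt_succ_iff_lt_or_eq.mp (by omega : j' < j + 2) with h | h
        · exact ihL j' h1 (by omega)
        · rw [h]; exact hLne
      · rw [hQ j hjK', RingHom.comp_apply, hq_xpow j hjK', map_mul, map_zpow₀,
          hHg j hjK', ihx, hQP, Finset.prod_Icc_succ_top (by omega : 1 ≤ j + 1)]
        ring
  obtain ⟨_, h2, h3⟩ := main K le_rfl
  exact ⟨h2, h3⟩
end
end

section
/- Gupta's formula for generalized cluster algebras: with g_K := g_{i_K;K} (the i_K-th column of G_K) and assuming each rational number (g_K, d_{(j)}·c_j)_{D_0R} (1 ≤ j ≤ K) is an integer, the cluster variable x_{i_K;t_K} of the generalized cluster algebra with principal coefficients, expressed in the initial variables as μ^{(K)}(x_{i_K}) ∈ F, satisfies μ^{(K)}(x_{i_K}) = x^{g_K}·∏_{j=1}^{K} L_j^{−(g_K, d_{(j)}·c_j)_{D_0R}}. Equivalently, its F-polynomial evaluated at (ŷ, z) equals ∏_{j=1}^{K} L_j^{−(g_K, d_{(j)}·c_j)_{D_0R}}. -/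
noncomputable section

section Aux

variable {n : ℕ} {r : Fin n → ℕ}

lemma Xv_ne_zero (i : Fin n) : (Xv (r := r) i) ≠ 0 := by
  simp [Xv, map_ne_zero_iff _ (IsFractionRing.injective (MvPolynomial (GVar n r) ℚ) (GF n r)),
    MvPolynomial.X_ne_zero]

lemma Yv_ne_zero (i : Fin n) : (Yv (r := r) i) ≠ 0 := by
  simp [Yv, map_ne_zero_iff _ (IsFractionRing.injective (MvPolynomial (GVar n r) ℚ) (GF n r)),
    MvPolynomial.X_ne_zero]

lemma zpow_fsum {α : Type*} (x : GF n r) (h : x ≠ 0) (s : Finset α) (f : α → ℤ) :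
    x ^ (∑ i ∈ s, f i) = ∏ i ∈ s, x ^ f i := by
  classical
  induction s using Finset.induction with
  | empty => simp
  | insert _ _ h2 ih => rw [Finset.sum_insert h2, Finset.prod_insert h2, zpow_add₀ h, ih]

lemma prod_zpow {α : Type*} (s : Finset α) (f : α → GF n r) (c : ℤ) :
    (∏ i ∈ s, f i) ^ c = ∏ i ∈ s, (f i) ^ c := by
  classical
  induction s using Finset.induction with
  | empty => simp
  | insert _ _ h2 ih => rw [Finset.prod_insert h2, Finset.prod_insert h2, mul_zpow, ih]

lemma xpow_ne_zero (v : Fin n → ℤ) : xpow r v ≠ 0 :=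
  Finset.prod_ne_zero_iff.mpr fun i _ => zpow_ne_zero (v i) (Xv_ne_zero i)

lemma xpow_add (v w : Fin n → ℤ) : xpow r (fun i => v i + w i) = xpow r v * xpow r w := by
  simp only [xpow, ← Finset.prod_mul_distrib]
  exact Finset.prod_congr rfl fun i _ => zpow_add₀ (Xv_ne_zero i) _ _

lemma xpow_zpow (v : Fin n → ℤ) (c : ℤ) : (xpow r v) ^ c = xpow r (fun i => c * v i) := by
  simp only [xpow, prod_zpow]
  exact Finset.prod_congr rfl fun i _ => by rw [← zpow_mul, mul_comm]

lemma xpow_inv (v : Fin n → ℤ) : (xpow r v)⁻¹ = xpow r (fun i => -(v i)) := by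
  rw [← zpow_neg_one, xpow_zpow]; simp

lemma prod_Yv_zpow (B₀ : Matrix (Fin n) (Fin n) ℤ) (v : Fin n → ℤ) :
    yhatpow r B₀ v = (∏ i, Yv (r := r) i ^ v i) * xpow r (B₀.mulVec v) := by
  simp only [yhatpow, yhat, mul_zpow, Finset.prod_mul_distrib]
  congr 1
  have : ∀ x : Fin n, (∏ j : Fin n, Xv (r := r) j ^ B₀ j x) ^ v x = ∏ j : Fin n, Xv (r := r) j ^ (B₀ j x * v x) := by
    intro x
    rw [prod_zpow]
    exact Finset.prod_congr rfl fun j _ => by rw [← zpow_mul]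
  simp only [this]
  rw [Finset.prod_comm]
  exact Finset.prod_congr rfl fun j _ => (zpow_fsum _ (Xv_ne_zero j) _ _).symm

lemma yhatpow_ne_zero (B₀ : Matrix (Fin n) (Fin n) ℤ) (v : Fin n → ℤ) :
    yhatpow r B₀ v ≠ 0 := by
  refine Finset.prod_ne_zero_iff.mpr fun i _ => zpow_ne_zero _ ?_
  exact mul_ne_zero (Yv_ne_zero i) (Finset.prod_ne_zero_iff.mpr fun j _ => zpow_ne_zero _ (Xv_ne_zero j))

end Aux

section Aux2
variable {n : ℕ} {r : Fin n → ℕ}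

lemma xpow_zero' : xpow r (fun _ => 0) = 1 := by simp [xpow]

lemma xpow_sum {α : Type*} (s : Finset α) (v : α → Fin n → ℤ) :
    ∏ l ∈ s, xpow r (v l) = xpow r (fun m => ∑ l ∈ s, v l m) := by
  classical
  induction s using Finset.induction with
  | empty => simp [xpow]
  | insert _ _ h2 ih =>
    rw [Finset.prod_insert h2, ih]
    rw [show (fun m => ∑ l ∈ insert _ _, v l m) = fun m => v _ m + ∑ l ∈ _, v l m from
      funext fun m => Finset.sum_insert h2, xpow_add]

lemma yhat_ne_zero (B₀ : Matrix (Fin n) (Fin n) ℤ) (i : Fin n) : yhat r B₀ i ≠ 0 :=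
  mul_ne_zero (Yv_ne_zero i)
    (Finset.prod_ne_zero_iff.mpr fun j _ => zpow_ne_zero _ (Xv_ne_zero j))

lemma yhatpow_zpow (B₀ : Matrix (Fin n) (Fin n) ℤ) (v : Fin n → ℤ) (c : ℤ) :
    (yhatpow r B₀ v) ^ c = yhatpow r B₀ (fun i => c * v i) := by
  simp only [yhatpow, prod_zpow]
  exact Finset.prod_congr rfl fun i _ => by rw [← zpow_mul, mul_comm]

end Aux2
set_option maxHeartbeats 2000000 in
/-- **Gupta's formula for generalized cluster algebras.** The cluster
variable `x_{i_K;t_K}` of the generalized cluster algebra with principal coefficients,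
expressed in the initial variables as `μ^{(K)}(x_{i_K})`, satisfies
`μ^{(K)}(x_{i_K}) = x^{g_K}·∏_{j=1}^{K} L_j^{-(g_K, d_{(j)}·c_j)_{D₀R}}`
(and the `L_j` are nonzero); equivalently, the `F`-polynomial evaluated at `(ŷ, z)`
equals `∏_{j=1}^{K} L_j^{-(g_K, d_{(j)}·c_j)_{D₀R}}`. -/
theorem stmt_14 (n K : ℕ) (hn : 1 ≤ n) (r : Fin n → ℕ) (hr : ∀ i, 0 < r i)
    (B₀ : Matrix (Fin n) (Fin n) ℤ)
    (D₀ : Fin n → ℤ) (hD₀ : ∀ i, 0 < D₀ i)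
    (hskew : ∀ i j, D₀ i * (r i : ℤ) * B₀ i j = -(D₀ j * (r j : ℤ) * B₀ j i))
    (idx : ℕ → Fin n) (ε : ℕ → ℤ)
    (hε : ∀ j < K, ε (j + 1) = 1 ∨ ε (j + 1) = -1)
    (B C G : ℕ → Matrix (Fin n) (Fin n) ℤ)
    (hB0 : B 0 = B₀) (hC0 : C 0 = 1) (hG0 : G 0 = 1)
    -- at each step the c-vector is nonzero and sign-coherent with common sign ε_j
    (hcv : ∀ j < K, (∃ l, C j l (idx (j + 1)) ≠ 0) ∧
      ∀ l, 0 ≤ ε (j + 1) * C j l (idx (j + 1)))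
    (hB : ∀ j < K, ∀ (a b : Fin n),
      B (j + 1) a b =
        if a = idx (j + 1) ∨ b = idx (j + 1) then -(B j a b)
        else B j a b + (r (idx (j + 1)) : ℤ) *
          (max (-(B j a (idx (j + 1)))) 0 * B j (idx (j + 1)) b
            + B j a (idx (j + 1)) * max (B j (idx (j + 1)) b) 0))
    (hC : ∀ j < K, ∀ (a b : Fin n),
      C (j + 1) a b =
        if b = idx (j + 1) then -(C j a b)
        else C j a b + (r (idx (j + 1)) : ℤ) *
          (C j a (idx (j + 1)) * max (ε (j + 1) * B j (idx (j + 1)) b) 0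
            + max (-(ε (j + 1) * C j a (idx (j + 1)))) 0 * B j (idx (j + 1)) b))
    (hG : ∀ j < K, ∀ (l i : Fin n),
      G (j + 1) l i =
        if i = idx (j + 1) then
          -(G j l i) + (r (idx (j + 1)) : ℤ) *
            ∑ p, max (-(ε (j + 1) * B j p (idx (j + 1)))) 0 * G j l p
        else G j l i)
    -- tropical duality
    (hdual : ∀ j ≤ K, ∀ (i l : Fin n),
      ∑ m, G j m i * (D₀ m * (r m : ℤ)) * C j m l =
        if i = l then D₀ l * (r l : ℤ) else 0)
    -- the rational numbers h_{i,j} = (e_i, d_{(j)}·c_j)_{D₀R} are integers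
    (hfun : ℕ → Fin n → ℤ)
    (hfunint : ∀ j < K, ∀ i,
      hfun (j + 1) i * (D₀ (idx (j + 1)) * (r (idx (j + 1)) : ℤ)) =
        D₀ i * (r i : ℤ) * C j i (idx (j + 1)))
    (μ : ℕ → (GF n r →+* GF n r))
    (hμ0 : ∀ j < K, ∀ a : ℚ, μ (j + 1) (Qc a) = Qc a)
    (hμy : ∀ j < K, ∀ i, μ (j + 1) (Yv i) = Yv i)
    (hμz : ∀ j < K, ∀ i s, μ (j + 1) (Zv i s) = Zv i s)
    (hμx : ∀ j < K, ∀ i, i ≠ idx (j + 1) → μ (j + 1) (Xv i) = Xv i)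
    (hμxk : ∀ j < K, μ (j + 1) (Xv (idx (j + 1))) =
      (Xv (idx (j + 1)) : GF n r)⁻¹ *
        (∏ l, Xv (r := r) l ^ max (-(ε (j + 1) * B j l (idx (j + 1)))) 0) ^ (r (idx (j + 1))) *
        ∑ s ∈ Finset.range (r (idx (j + 1)) + 1),
          Zc r (idx (j + 1)) s *
            ((∏ l, Yv (r := r) l ^ C j l (idx (j + 1))) *
              ∏ l, Xv (r := r) l ^ B j l (idx (j + 1))) ^ (ε (j + 1) * s))
    (M : ℕ → (GF n r →+* GF n r))
    (hM0 : M 0 = RingHom.id _)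
    (hM : ∀ j < K, M (j + 1) = (M j).comp (μ (j + 1)))
    -- the rational numbers (ĉ_l⁺, d_{(j)}·c_j)_{D₀R} are integers `e l j`
    (e : ℕ → ℕ → ℤ)
    (he : ∀ l, 1 ≤ l → l ≤ K → ∀ j, 1 ≤ j → j ≤ l →
      e l j * (D₀ (idx j) * (r (idx j) : ℤ)) =
        ∑ m, B₀.mulVec (fun i => ε l * C (l - 1) i (idx l)) m *
          (D₀ m * (r m : ℤ)) * C (j - 1) m (idx j))
    (L : ℕ → GF n r)
    (hL1 : L 1 = ∑ s ∈ Finset.range (r (idx 1) + 1),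
      Zc r (idx 1) s * yhatpow r B₀ (fun i => ε 1 * C 0 i (idx 1)) ^ s)
    (hLl : ∀ l, 2 ≤ l → l ≤ K → L l = ∑ s ∈ Finset.range (r (idx l) + 1),
      Zc r (idx l) s * (yhatpow r B₀ (fun i => ε l * C (l - 1) i (idx l)) *
        ∏ j ∈ Finset.Icc 1 (l - 1), L j ^ (-(e l j))) ^ s)
    -- the rational numbers (g_K, d_{(j)}·c_j)_{D₀R} are integers `hg j`
    (hK : 1 ≤ K) (hg : ℕ → ℤ)
    (hgint : ∀ j, 1 ≤ j → j ≤ K →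
      hg j * (D₀ (idx j) * (r (idx j) : ℤ)) =
        ∑ m, G K m (idx K) * (D₀ m * (r m : ℤ)) * C (j - 1) m (idx j))
    : (∀ j, 1 ≤ j → j ≤ K → L j ≠ 0) ∧
    M K (Xv (idx K)) =
      xpow r (fun m => G K m (idx K)) * ∏ j ∈ Finset.Icc 1 K, L j ^ (-(hg j)) := by
  classical
  have hmax : ∀ a x : ℤ, 0 < a → a * max x 0 = max (a*x) 0 := by
    intro a x h
    rcases le_total x 0 with h'|h'
    · rw [max_eq_right h', max_eq_right (by nlinarith), mul_zero]
    · rw [max_eq_left h', max_eq_left (by nlinarith)]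
  have hmaxid : ∀ ε x c : ℤ, ε = 1 ∨ ε = -1 →
      max (-x) 0 * c + x * max c 0 - max (-(ε*x)) 0 * c = max (ε*c) 0 * x := by
    intro ε x c hε
    have h1 : max (-x) 0 = max x 0 - x := by omega
    rcases hε with rfl|rfl
    · simp; ring
    · have h2 : max (-(-1*x)) 0 = max x 0 := by omega
      have h3 : max (-1*c) 0 = max c 0 - c := by omega
      rw [h2, h3, h1]; ring
  have hDr : ∀ i : Fin n, (0:ℤ) < D₀ i * (r i : ℤ) :=
    fun i => mul_pos (hD₀ i) (by exact_mod_cast hr i)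
  have hDrne : ∀ i : Fin n, (D₀ i * (r i : ℤ)) ≠ 0 := fun i => (hDr i).ne'
  -- skewness is preserved
  have skew : ∀ t, t ≤ K → ∀ i j, D₀ i * (r i:ℤ) * B t i j = -(D₀ j * (r j:ℤ) * B t j i) := by
    intro t
    induction t with
    | zero => intro _ i j; rw [hB0]; exact hskew i j
    | succ t ih =>
      intro ht i j
      have htK : t < K := ht
      have ih := ih (le_of_lt htK)
      rw [hB t htK i j, hB t htK j i]
      by_cases hij : i = idx (t+1) ∨ j = idx (t+1)
      · rw [if_pos hij, if_pos (Or.symm hij)]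
        have := ih i j; linarith
      · push_neg at hij
        rw [if_neg (by tauto), if_neg (by tauto)]
        have e1 := ih i j
        have e2 := ih i (idx (t+1))
        have e3 := ih j (idx (t+1))
        have m1 : D₀ i * (r i:ℤ) * max (-(B t i (idx (t+1)))) 0
            = D₀ (idx (t+1)) * (r (idx (t+1)):ℤ) * max (B t (idx (t+1)) i) 0 := by
          rw [hmax _ _ (hDr i), hmax _ _ (hDr (idx (t+1)))]
          congr 1; linarith
        have m2 : D₀ j * (r j:ℤ) * max (-(B t j (idx (t+1)))) 0
            = D₀ (idx (t+1)) * (r (idx (t+1)):ℤ) * max (B t (idx (t+1)) j) 0 := by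
          rw [hmax _ _ (hDr j), hmax _ _ (hDr (idx (t+1)))]
          congr 1; linarith
        linear_combination e1 + (r (idx (t+1)):ℤ) * B t (idx (t+1)) j * m1
          + (r (idx (t+1)):ℤ) * max (B t (idx (t+1)) j) 0 * e2
          + (r (idx (t+1)):ℤ) * B t (idx (t+1)) i * m2
          + (r (idx (t+1)):ℤ) * max (B t (idx (t+1)) i) 0 * e3
  have diag0 : ∀ t, t ≤ K → ∀ i, B t i i = 0 := by
    intro t ht i
    have h := skew t ht i i
    have h2 : D₀ i * (r i:ℤ) * B t i i = 0 := by linarith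
    exact (mul_eq_zero.mp h2).resolve_left (hDrne i)
  -- G_t B_t = B₀ C_t
  have hGB : ∀ t, t ≤ K → ∀ a b, ∑ l, G t a l * B t l b = ∑ l, B₀ a l * C t l b := by
    intro t
    induction t with
    | zero => intro _ a b; rw [hB0, hC0, hG0]; simp [Matrix.one_apply]
    | succ t ih =>
      intro ht a b
      have htK : t < K := ht
      have ih := ih (le_of_lt htK)
      have hkk : B t (idx (t+1)) (idx (t+1)) = 0 := diag0 t (le_of_lt htK) (idx (t+1))
      by_cases hb : b = idx (t+1)
      · subst hb
        have key : ∀ l, G (t+1) a l * B (t+1) l (idx (t+1)) = G t a l * (-(B t l (idx (t+1)))) := by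
          intro l
          have hBl : B (t+1) l (idx (t+1)) = -(B t l (idx (t+1))) := by
            rw [hB t htK l _, if_pos (Or.inr rfl)]
          by_cases hl : l = idx (t+1)
          · subst hl; rw [hBl, hkk]; ring
          · rw [hBl, hG t htK a l, if_neg hl]
        calc ∑ l, G (t+1) a l * B (t+1) l (idx (t+1))
            = ∑ l, -(G t a l * B t l (idx (t+1))) := by
              exact Finset.sum_congr rfl fun l _ => by rw [key l]; ring
          _ = -∑ l, G t a l * B t l (idx (t+1)) := by rw [Finset.sum_neg_distrib]
          _ = -∑ l, B₀ a l * C t l (idx (t+1)) := by rw [ih]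
          _ = ∑ l, B₀ a l * C (t+1) l (idx (t+1)) := by
              rw [← Finset.sum_neg_distrib]
              exact Finset.sum_congr rfl fun l _ => by
                rw [hC t htK l _, if_pos rfl]; ring
      · -- b ≠ k
        have hmk : max (-(ε (t+1) * B t (idx (t+1)) (idx (t+1)))) 0 = 0 := by rw [hkk]; simp
        have hS : ∑ p, max (-(ε (t+1) * B t p (idx (t+1)))) 0 * G t a p
            = ∑ p ∈ Finset.univ.erase (idx (t+1)),
                max (-(ε (t+1) * B t p (idx (t+1)))) 0 * G t a p := by
          rw [← Finset.add_sum_erase _ _ (Finset.mem_univ (idx (t+1))), hmk, zero_mul, zero_add]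
        have hGk : G (t+1) a (idx (t+1)) = -(G t a (idx (t+1))) + (r (idx (t+1)):ℤ) *
            ∑ p, max (-(ε (t+1) * B t p (idx (t+1)))) 0 * G t a p := by
          rw [hG t htK a _, if_pos rfl]
        have hBk : B (t+1) (idx (t+1)) b = -(B t (idx (t+1)) b) := by
          rw [hB t htK _ b, if_pos (Or.inl rfl)]
        calc ∑ l, G (t+1) a l * B (t+1) l b
            = G (t+1) a (idx (t+1)) * B (t+1) (idx (t+1)) b
              + ∑ l ∈ Finset.univ.erase (idx (t+1)), G (t+1) a l * B (t+1) l b :=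
              (Finset.add_sum_erase _ _ (Finset.mem_univ _)).symm
          _ = (-(G t a (idx (t+1))) + (r (idx (t+1)):ℤ) *
                  ∑ p ∈ Finset.univ.erase (idx (t+1)),
                    max (-(ε (t+1) * B t p (idx (t+1)))) 0 * G t a p)
                * (-(B t (idx (t+1)) b))
              + ∑ l ∈ Finset.univ.erase (idx (t+1)),
                  G t a l * (B t l b + (r (idx (t+1)):ℤ) *
                    (max (-(B t l (idx (t+1)))) 0 * B t (idx (t+1)) b
                      + B t l (idx (t+1)) * max (B t (idx (t+1)) b) 0)) := by
              rw [hGk, hBk, hS]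
              congr 1
              refine Finset.sum_congr rfl fun l hl => ?_
              have hl' : l ≠ idx (t+1) := Finset.ne_of_mem_erase hl
              rw [hG t htK a l, if_neg hl', hB t htK l b, if_neg (by tauto)]
          _ = (G t a (idx (t+1)) * B t (idx (t+1)) b
                + (r (idx (t+1)):ℤ) * max (ε (t+1) * B t (idx (t+1)) b) 0
                  * (G t a (idx (t+1)) * B t (idx (t+1)) (idx (t+1))))
              + ∑ l ∈ Finset.univ.erase (idx (t+1)),
                  (G t a l * B t l b + (r (idx (t+1)):ℤ) * max (ε (t+1) * B t (idx (t+1)) b) 0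
                    * (G t a l * B t l (idx (t+1)))) := by
              rw [hkk, mul_zero, mul_zero, add_zero]
              have hsum : ∑ l ∈ Finset.univ.erase (idx (t+1)),
                  G t a l * (B t l b + (r (idx (t+1)):ℤ) *
                    (max (-(B t l (idx (t+1)))) 0 * B t (idx (t+1)) b
                      + B t l (idx (t+1)) * max (B t (idx (t+1)) b) 0))
                = ∑ l ∈ Finset.univ.erase (idx (t+1)),
                  ((G t a l * B t l b + (r (idx (t+1)):ℤ) * max (ε (t+1) * B t (idx (t+1)) b) 0
                    * (G t a l * B t l (idx (t+1))))
                   + (r (idx (t+1)):ℤ) * B t (idx (t+1)) b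
                      * (max (-(ε (t+1) * B t l (idx (t+1)))) 0 * G t a l)) := by
                refine Finset.sum_congr rfl fun l _ => ?_
                have hid := hmaxid (ε (t+1)) (B t l (idx (t+1))) (B t (idx (t+1)) b) (hε t htK)
                linear_combination (G t a l) * (r (idx (t+1)):ℤ) * hid
              rw [hsum, Finset.sum_add_distrib, ← Finset.mul_sum]
              ring
          _ = ∑ l, (G t a l * B t l b + (r (idx (t+1)):ℤ) * max (ε (t+1) * B t (idx (t+1)) b) 0
                    * (G t a l * B t l (idx (t+1)))) :=
              Finset.add_sum_erase Finset.univ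
                (fun l => G t a l * B t l b + (r (idx (t+1)):ℤ)
                  * max (ε (t+1) * B t (idx (t+1)) b) 0 * (G t a l * B t l (idx (t+1))))
                (Finset.mem_univ _)
          _ = ∑ l, G t a l * B t l b + (r (idx (t+1)):ℤ) * max (ε (t+1) * B t (idx (t+1)) b) 0
                * ∑ l, G t a l * B t l (idx (t+1)) := by
              rw [Finset.sum_add_distrib, ← Finset.mul_sum]
          _ = ∑ l, B₀ a l * C t l b + (r (idx (t+1)):ℤ) * max (ε (t+1) * B t (idx (t+1)) b) 0
                * ∑ l, B₀ a l * C t l (idx (t+1)) := by rw [ih, ih]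
          _ = ∑ l, B₀ a l * C (t+1) l b := by
              rw [Finset.mul_sum, ← Finset.sum_add_distrib]
              refine Finset.sum_congr rfl fun l _ => ?_
              rw [hC t htK l b, if_neg hb]
              have h0 : max (-(ε (t+1) * C t l (idx (t+1)))) 0 = 0 := by
                have := (hcv t htK).2 l
                omega
              rw [h0]; ring
  -- M fixes Y, Z, Zc, Q
  have hMy : ∀ t, t ≤ K → ∀ i, M t (Yv i) = Yv i := by
    intro t
    induction t with
    | zero => intro _ i; rw [hM0]; rfl
    | succ t ih => intro ht i; rw [hM t ht, RingHom.comp_apply, hμy t ht, ih (le_of_lt ht)]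
  have hMzc : ∀ t, t ≤ K → ∀ i s, M t (Zc r i s) = Zc r i s := by
    intro t ht i s
    rw [Zc]
    split
    · induction t with
      | zero => rw [hM0]; rfl
      | succ t ih => rw [hM t ht, RingHom.comp_apply, hμz t ht, ih (le_of_lt ht)]
    · exact map_one _
  have hMinj : ∀ t, Function.Injective (M t) := fun t => (M t).injective
  have main : ∀ t, t ≤ K →
      (∀ j, 1 ≤ j → j ≤ t → L j ≠ 0) ∧
      ∀ i, M t (Xv i) = xpow r (fun m => G t m i)
        * ∏ j ∈ Finset.Icc 1 t, L j ^ (-(∑ m, G t m i * hfun j m)) := by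
    intro t
    induction t with
    | zero =>
      intro _
      refine ⟨fun j h1 h2 => absurd h2 (by omega), fun i => ?_⟩
      rw [hM0, RingHom.id_apply, hG0]
      rw [show Finset.Icc 1 0 = (∅ : Finset ℕ) from Finset.Icc_eq_empty (by omega)]
      rw [Finset.prod_empty, mul_one, xpow]
      rw [Finset.prod_eq_single i (fun m _ hm => by
        simp [Matrix.one_apply, hm]) (fun h => absurd (Finset.mem_univ i) h)]
      simp [Matrix.one_apply]
    | succ t ihh =>
      intro ht
      have htK : t < K := ht
      obtain ⟨ihL, ihX⟩ := ihh (le_of_lt htK)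
      -- product formula for monomials in the M t images
      have prodMt : ∀ w : Fin n → ℤ, (∏ l, (M t (Xv l)) ^ (w l)) =
          xpow r (fun m => ∑ l, G t m l * w l)
          * ∏ j ∈ Finset.Icc 1 t, L j ^ (-(∑ l, w l * ∑ m, G t m l * hfun j m)) := by
        intro w
        have h1 : ∀ l : Fin n, (M t (Xv l)) ^ (w l) =
            xpow r (fun m => w l * G t m l) *
            ∏ j ∈ Finset.Icc 1 t, L j ^ (-(∑ m, G t m l * hfun j m) * w l) := by
          intro l
          rw [ihX l, mul_zpow, xpow_zpow, prod_zpow]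
          exact congrArg _ (Finset.prod_congr rfl fun j _ => by rw [← zpow_mul])
        simp only [h1]
        rw [Finset.prod_mul_distrib, xpow_sum Finset.univ (fun l => fun m => w l * G t m l)]
        congr 1
        · congr 1
          funext m
          exact Finset.sum_congr rfl fun l _ => mul_comm _ _
        · rw [Finset.prod_comm]
          refine Finset.prod_congr rfl fun j hj => ?_
          have hLj : L j ≠ 0 :=
            ihL j (Finset.mem_Icc.mp hj).1 (Finset.mem_Icc.mp hj).2
          rw [← zpow_fsum _ hLj]
          congr 1
          rw [← Finset.sum_neg_distrib]
          exact Finset.sum_congr rfl fun l _ => by ring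
      -- the new last exponent
      have hgend : ∀ i, (∑ m, G (t+1) m i * hfun (t+1) m)
          = if i = idx (t+1) then -1 else 0 := by
        intro i
        have hcancel : (∑ m, G (t+1) m i * hfun (t+1) m)
            * (D₀ (idx (t+1)) * (r (idx (t+1)):ℤ))
            = -(if i = idx (t+1) then D₀ (idx (t+1)) * (r (idx (t+1)):ℤ) else 0) := by
          rw [Finset.sum_mul]
          have hterm : ∀ m, G (t+1) m i * hfun (t+1) m
                * (D₀ (idx (t+1)) * (r (idx (t+1)):ℤ))
              = -(G (t+1) m i * (D₀ m * (r m:ℤ)) * C (t+1) m (idx (t+1))) := by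
            intro m
            have h1 := hfunint t htK m
            have h2 : C (t+1) m (idx (t+1)) = -(C t m (idx (t+1))) := by
              rw [hC t htK m _, if_pos rfl]
            rw [h2]
            linear_combination (G (t+1) m i) * h1
          rw [Finset.sum_congr rfl (fun m _ => hterm m), Finset.sum_neg_distrib,
            hdual (t+1) ht i (idx (t+1))]
        by_cases hik : i = idx (t+1)
        · rw [if_pos hik] at hcancel ⊢
          refine mul_right_cancel₀ (hDrne (idx (t+1))) ?_
          rw [hcancel]; ring
        · rw [if_neg hik] at hcancel ⊢
          rw [neg_zero] at hcancel
          exact (mul_eq_zero.mp hcancel).resolve_right (hDrne _)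
      -- exponent identity with e
      have hEexp : ∀ j ∈ Finset.Icc 1 t,
          ε (t+1) * ∑ l, B t l (idx (t+1)) * (∑ m, G t m l * hfun j m) = e (t+1) j := by
        intro j hj
        have hj' := Finset.mem_Icc.mp hj
        obtain ⟨j', rfl⟩ : ∃ j'', j = j'' + 1 := ⟨j - 1, by omega⟩
        refine mul_right_cancel₀ (hDrne (idx (j'+1))) ?_
        rw [he (t+1) (by omega) ht (j'+1) (by omega) (by omega)]
        simp only [Nat.add_sub_cancel]
        calc (ε (t+1) * ∑ l, B t l (idx (t+1)) * (∑ m, G t m l * hfun (j'+1) m))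
              * (D₀ (idx (j'+1)) * (r (idx (j'+1)):ℤ))
            = ∑ l, ∑ m, (ε (t+1) * B t l (idx (t+1)))
                * (G t m l * (hfun (j'+1) m * (D₀ (idx (j'+1)) * (r (idx (j'+1)):ℤ)))) := by
              simp only [Finset.sum_mul, Finset.mul_sum]
              exact Finset.sum_congr rfl fun l _ => Finset.sum_congr rfl fun m _ => by ring
          _ = ∑ l, ∑ m, (ε (t+1) * B t l (idx (t+1)))
                * (G t m l * (D₀ m * (r m:ℤ) * C j' m (idx (j'+1)))) := by
              refine Finset.sum_congr rfl fun l _ => Finset.sum_congr rfl fun m _ => ?_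
              rw [hfunint j' (by omega) m]
          _ = ∑ m, ∑ l, (ε (t+1) * B t l (idx (t+1)))
                * (G t m l * (D₀ m * (r m:ℤ) * C j' m (idx (j'+1)))) := Finset.sum_comm
          _ = ∑ m, (∑ l, B₀ m l * C t l (idx (t+1)))
                * (ε (t+1) * (D₀ m * (r m:ℤ) * C j' m (idx (j'+1)))) := by
              refine Finset.sum_congr rfl fun m _ => ?_
              rw [← hGB t (le_of_lt htK) m (idx (t+1)), Finset.sum_mul]
              exact Finset.sum_congr rfl fun l _ => by ring
          _ = ∑ m, B₀.mulVec (fun i => ε (t+1) * C t i (idx (t+1))) m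
                * (D₀ m * (r m:ℤ)) * C j' m (idx (j'+1)) := by
              refine Finset.sum_congr rfl fun m _ => ?_
              simp only [Matrix.mulVec, dotProduct, Finset.sum_mul]
              exact Finset.sum_congr rfl fun l _ => by ring
      have hMexp : M (t+1) (Xv (idx (t+1))) =
          (M t (Xv (idx (t+1))))⁻¹
          * (∏ l, (M t (Xv l)) ^ (max (-(ε (t+1) * B t l (idx (t+1)))) 0)) ^ (r (idx (t+1)))
          * ∑ s ∈ Finset.range (r (idx (t+1)) + 1),
              Zc r (idx (t+1)) s *
                ((∏ l, Yv (r:=r) l ^ C t l (idx (t+1)))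
                  * ∏ l, (M t (Xv l)) ^ (B t l (idx (t+1)))) ^ (ε (t+1) * (s:ℤ)) := by
        rw [hM t htK]
        simp only [RingHom.coe_comp, Function.comp_apply]
        rw [hμxk t htK]
        simp only [map_mul, map_inv₀, map_pow, map_prod, map_sum, map_zpow₀,
          hMy t (le_of_lt htK), hMzc t (le_of_lt htK)]
      have hinner : (∏ l, Yv (r:=r) l ^ C t l (idx (t+1)))
            * ∏ l, (M t (Xv l)) ^ (B t l (idx (t+1)))
          = yhatpow r B₀ (fun l => C t l (idx (t+1)))
            * ∏ j ∈ Finset.Icc 1 t,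
                L j ^ (-(∑ l, B t l (idx (t+1)) * ∑ m, G t m l * hfun j m)) := by
        rw [prodMt (fun l => B t l (idx (t+1)))]
        have hx : (fun m => ∑ l, G t m l * B t l (idx (t+1)))
            = B₀.mulVec (fun l => C t l (idx (t+1))) := by
          funext m
          rw [hGB t (le_of_lt htK) m (idx (t+1))]
          simp [Matrix.mulVec, dotProduct]
        rw [hx, ← mul_assoc, ← prod_Yv_zpow]
      have hstep : ∀ s : ℕ, ((∏ l, Yv (r:=r) l ^ C t l (idx (t+1)))
            * ∏ l, (M t (Xv l)) ^ (B t l (idx (t+1)))) ^ (ε (t+1) * (s:ℤ))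
          = (yhatpow r B₀ (fun l => ε (t+1) * C t l (idx (t+1)))
            * ∏ j ∈ Finset.Icc 1 t, L j ^ (-(e (t+1) j))) ^ s := by
        intro s
        rw [hinner, zpow_mul, zpow_natCast]
        congr 1
        rw [mul_zpow, yhatpow_zpow, prod_zpow]
        congr 1
        refine Finset.prod_congr rfl fun j hj => ?_
        rw [← zpow_mul]
        congr 1
        have h5 := hEexp j hj
        linear_combination -h5
      have hsumL : (∑ s ∈ Finset.range (r (idx (t+1)) + 1),
          Zc r (idx (t+1)) s * ((∏ l, Yv (r:=r) l ^ C t l (idx (t+1)))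
            * ∏ l, (M t (Xv l)) ^ (B t l (idx (t+1)))) ^ (ε (t+1) * (s:ℤ))) = L (t+1) := by
        simp only [hstep]
        by_cases ht0 : t = 0
        · subst ht0
          rw [hL1]
          refine Finset.sum_congr rfl fun s _ => ?_
          rw [show Finset.Icc 1 0 = (∅ : Finset ℕ) from Finset.Icc_eq_empty (by omega),
            Finset.prod_empty, mul_one]
        · rw [hLl (t+1) (by omega) ht]
          simp only [Nat.add_sub_cancel]
      have hXpart : (xpow r (fun m => G t m (idx (t+1))))⁻¹
          * (xpow r (fun m => ∑ l, G t m l * max (-(ε (t+1) * B t l (idx (t+1)))) 0))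
              ^ (r (idx (t+1)))
          = xpow r (fun m => G (t+1) m (idx (t+1))) := by
        rw [xpow_inv, ← zpow_natCast (xpow r _) (r (idx (t+1))), xpow_zpow, ← xpow_add]
        congr 1
        funext m
        rw [hG t htK m (idx (t+1)), if_pos rfl]
        have hs : ∑ p, max (-(ε (t+1) * B t p (idx (t+1)))) 0 * G t m p
            = ∑ l, G t m l * max (-(ε (t+1) * B t l (idx (t+1)))) 0 :=
          Finset.sum_congr rfl fun l _ => mul_comm _ _
        rw [hs]
      have hQexp : ∀ j, (∑ m, G (t+1) m (idx (t+1)) * hfun j m)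
          = -(∑ m, G t m (idx (t+1)) * hfun j m)
            + (r (idx (t+1)):ℤ) * ∑ l, (max (-(ε (t+1) * B t l (idx (t+1)))) 0)
                * (∑ m, G t m l * hfun j m) := by
        intro j
        calc ∑ m, G (t+1) m (idx (t+1)) * hfun j m
            = ∑ m, ((-(G t m (idx (t+1))) + (r (idx (t+1)):ℤ)
                * ∑ p, max (-(ε (t+1) * B t p (idx (t+1)))) 0 * G t m p) * hfun j m) := by
              refine Finset.sum_congr rfl fun m _ => ?_
              rw [hG t htK m (idx (t+1)), if_pos rfl]
          _ = (∑ m, -(G t m (idx (t+1)) * hfun j m)) + (r (idx (t+1)):ℤ)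
              * ∑ m, ∑ p, max (-(ε (t+1) * B t p (idx (t+1)))) 0 * G t m p * hfun j m := by
              rw [Finset.mul_sum, ← Finset.sum_add_distrib]
              refine Finset.sum_congr rfl fun m _ => ?_
              rw [add_mul, neg_mul, mul_assoc, Finset.sum_mul]
          _ = -(∑ m, G t m (idx (t+1)) * hfun j m)
              + (r (idx (t+1)):ℤ) * ∑ l, (max (-(ε (t+1) * B t l (idx (t+1)))) 0)
                  * (∑ m, G t m l * hfun j m) := by
              congr 1
              · rw [Finset.sum_neg_distrib]
              · congr 1
                rw [Finset.sum_comm]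
                refine Finset.sum_congr rfl fun p _ => ?_
                rw [Finset.mul_sum]
                exact Finset.sum_congr rfl fun m _ => by ring
      have hQpart : (∏ j ∈ Finset.Icc 1 t,
            L j ^ (-(∑ m, G t m (idx (t+1)) * hfun j m)))⁻¹
          * (∏ j ∈ Finset.Icc 1 t, L j ^ (-(∑ l, max (-(ε (t+1) * B t l (idx (t+1)))) 0
              * ∑ m, G t m l * hfun j m))) ^ (r (idx (t+1)))
          = ∏ j ∈ Finset.Icc 1 t, L j ^ (-(∑ m, G (t+1) m (idx (t+1)) * hfun j m)) := by
        rw [← Finset.prod_inv_distrib, ← Finset.prod_pow, ← Finset.prod_mul_distrib]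
        refine Finset.prod_congr rfl fun j hj => ?_
        have hLj : L j ≠ 0 := ihL j (Finset.mem_Icc.mp hj).1 (Finset.mem_Icc.mp hj).2
        rw [← zpow_neg, ← zpow_natCast (L j ^ _) (r (idx (t+1))), ← zpow_mul,
          ← zpow_add₀ hLj]
        congr 1
        rw [hQexp j]
        ring
      have hkk2 : M (t+1) (Xv (idx (t+1))) =
          xpow r (fun m => G (t+1) m (idx (t+1)))
          * (∏ j ∈ Finset.Icc 1 t, L j ^ (-(∑ m, G (t+1) m (idx (t+1)) * hfun j m)))
          * L (t+1) := by
        rw [hMexp, hsumL, ihX (idx (t+1)),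
          prodMt (fun l => max (-(ε (t+1) * B t l (idx (t+1)))) 0)]
        rw [mul_inv, mul_pow, ← hXpart, ← hQpart]
        ring
      have hXnew : ∀ i, M (t+1) (Xv i) = xpow r (fun m => G (t+1) m i)
          * ∏ j ∈ Finset.Icc 1 (t+1), L j ^ (-(∑ m, G (t+1) m i * hfun j m)) := by
        intro i
        by_cases hik : i = idx (t+1)
        · subst hik
          rw [hkk2, Finset.prod_Icc_succ_top (by omega : 1 ≤ t + 1)
            (fun j => L j ^ (-(∑ m, G (t+1) m (idx (t+1)) * hfun j m)))]
          rw [hgend (idx (t+1)), if_pos rfl, neg_neg, zpow_one, mul_assoc]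
        · have hGcol : ∀ m : Fin n, G (t+1) m i = G t m i := fun m => by
            rw [hG t htK m i, if_neg hik]
          rw [hM t htK]
          simp only [RingHom.coe_comp, Function.comp_apply]
          rw [hμx t htK i hik]
          rw [ihX i]
          rw [Finset.prod_Icc_succ_top (by omega : 1 ≤ t + 1)
              (fun j => L j ^ (-(∑ m, G (t+1) m i * hfun j m)))]
          rw [hgend i, if_neg hik, neg_zero, zpow_zero, mul_one]
          simp only [hGcol]
      have hLnew : L (t+1) ≠ 0 := by
        have h0 : M (t+1) (Xv (idx (t+1))) ≠ 0 := by
          intro h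
          exact Xv_ne_zero (idx (t+1)) (hMinj (t+1) (by rw [h, map_zero]))
        rw [hkk2] at h0
        intro hL0
        rw [hL0, mul_zero] at h0
        exact h0 rfl
      refine ⟨fun j h1 h2 => ?_, hXnew⟩
      rcases Nat.lt_or_ge j (t+1) with hj | hj
      · exact ihL j h1 (by omega)
      · have : j = t+1 := by omega
        subst this; exact hLnew
  obtain ⟨hLne, hMX⟩ := main K le_rfl
  obtain ⟨hLne, hMX⟩ := main K le_rfl
  refine ⟨hLne, ?_⟩
  rw [hMX (idx K)]
  congr 1
  refine Finset.prod_congr rfl fun j hj => ?_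
  have hj' := Finset.mem_Icc.mp hj
  obtain ⟨j', rfl⟩ : ∃ j'', j = j'' + 1 := ⟨j - 1, by omega⟩
  have h1 := hgint (j'+1) (by omega) (by omega)
  have h2 : (∑ m, G K m (idx K) * hfun (j'+1) m)
      * (D₀ (idx (j'+1)) * (r (idx (j'+1)):ℤ))
      = ∑ m, G K m (idx K) * (D₀ m * (r m:ℤ)) * C ((j'+1)-1) m (idx (j'+1)) := by
    rw [Finset.sum_mul]
    refine Finset.sum_congr rfl fun m _ => ?_
    have h3 := hfunint j' (by omega) m
    simp only [Nat.add_sub_cancel]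
    linear_combination (G K m (idx K)) * h3
  have h4 : (∑ m, G K m (idx K) * hfun (j'+1) m) = hg (j'+1) :=
    mul_right_cancel₀ (hDrne _) (by rw [h2, ← h1])
  rw [h4]
end
end

section
/- For every h ∈ ℤ and every N ∈ ℕ, the coefficient of X^N in P^h equals the sum, over all tuples (n_1,…,n_l) ∈ ℕ^l with ∑_{i=1}^l i·n_i = N, of C(h, n_1+⋯+n_l) · (n_1+⋯+n_l)!/(n_1!⋯n_l!) · ∏_{i=1}^l a_i^{n_i}. -/
/-- The generalized binomial coefficient `C(h,m) = h(h-1)⋯(h-m+1)/m!` for `h ∈ ℤ`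
(the division is exact). -/
def intChoose (h : ℤ) (m : ℕ) : ℤ :=
  (∏ j ∈ Finset.range m, (h - (j : ℤ))) / (m.factorial : ℤ)

section Aux

open Finset PowerSeries

lemma stmt15_prod_eq_desc (h : ℤ) (m : ℕ) :
    (∏ j ∈ Finset.range m, (h - (j : ℤ))) = (descPochhammer ℤ m).smeval h := by
  induction m with
  | zero => simp [descPochhammer_zero, Polynomial.smeval_one]
  | succ n ih =>
      rw [Finset.prod_range_succ, ih, descPochhammer_succ_right, Polynomial.smeval_mul]
      congr 1
      simp [Polynomial.smeval_sub, Polynomial.smeval_X, Polynomial.smeval_natCast]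

lemma intChoose_eq (h : ℤ) (m : ℕ) : intChoose h m = Ring.choose h m := by
  rw [intChoose, stmt15_prod_eq_desc, Ring.descPochhammer_eq_factorial_smul_choose, nsmul_eq_mul,
    Int.mul_ediv_cancel_left _ (by exact_mod_cast m.factorial_ne_zero)]

variable {A : Type*} [CommRing A] {l : ℕ} (a : Fin l → A)

noncomputable def QQ15 : PowerSeries A :=
  ∑ i : Fin l, PowerSeries.C (a i) * (PowerSeries.X : PowerSeries A) ^ ((i : ℕ) + 1)

lemma qzero15 {m N : ℕ} (h : N < m) : coeff N ((QQ15 a) ^ m) = 0 := by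
  have hX : (X : PowerSeries A) ∣ QQ15 a := by
    refine Finset.dvd_sum fun i _ => ?_
    exact Dvd.dvd.mul_left (dvd_pow_self _ (Nat.succ_ne_zero _)) _
  have : (X : PowerSeries A) ^ m ∣ (QQ15 a) ^ m := pow_dvd_pow_of_dvd hX m
  exact (PowerSeries.X_pow_dvd_iff.mp this) N h

noncomputable def S15 (h : ℤ) : PowerSeries A :=
  PowerSeries.mk fun N => ∑ m ∈ Finset.range (N + 1),
    ((Ring.choose h m : ℤ) : A) * coeff N ((QQ15 a) ^ m)

lemma coeff_S15 (h : ℤ) {N M : ℕ} (hM : N < M) :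
    coeff N (S15 a h) = ∑ m ∈ Finset.range M,
      ((Ring.choose h m : ℤ) : A) * coeff N ((QQ15 a) ^ m) := by
  rw [S15, coeff_mk]
  refine Finset.sum_subset (Finset.range_subset_range.2 hM) fun m _ hm => ?_
  rw [qzero15 a (by simp at hm ⊢; omega), mul_zero]

lemma S15_mul (h₁ h₂ : ℤ) : S15 a (h₁ + h₂) = S15 a h₁ * S15 a h₂ := by
  ext N
  have key : ∀ j k : ℕ, N < j + k →
      (∑ p ∈ antidiagonal N, coeff p.1 ((QQ15 a) ^ j) * coeff p.2 ((QQ15 a) ^ k)) = 0 := by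
    intro j k hjk
    refine Finset.sum_eq_zero fun p hp => ?_
    rw [Finset.HasAntidiagonal.mem_antidiagonal] at hp
    rcases lt_or_ge p.1 j with hc | hc
    · rw [qzero15 a hc, zero_mul]
    · rw [qzero15 a (show p.2 < k by omega), mul_zero]
  rw [PowerSeries.coeff_mul, coeff_S15 a _ (Nat.lt_succ_self N)]
  have hrhs : ∑ p ∈ antidiagonal N, coeff p.1 (S15 a h₁) * coeff p.2 (S15 a h₂)
      = ∑ j ∈ range (N+1), ∑ k ∈ range (N+1),
          ((Ring.choose h₁ j : ℤ) : A) * ((Ring.choose h₂ k : ℤ) : A) *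
            ∑ p ∈ antidiagonal N, coeff p.1 ((QQ15 a) ^ j) * coeff p.2 ((QQ15 a) ^ k) := by
    have : ∀ p ∈ antidiagonal N, coeff p.1 (S15 a h₁) * coeff p.2 (S15 a h₂)
        = ∑ j ∈ range (N+1), ∑ k ∈ range (N+1),
            (((Ring.choose h₁ j : ℤ) : A) * coeff p.1 ((QQ15 a) ^ j)) *
            (((Ring.choose h₂ k : ℤ) : A) * coeff p.2 ((QQ15 a) ^ k)) := by
      intro p hp
      rw [Finset.HasAntidiagonal.mem_antidiagonal] at hp
      rw [coeff_S15 a h₁ (N := p.1) (M := N+1) (by omega),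
        coeff_S15 a h₂ (N := p.2) (M := N+1) (by omega), Finset.sum_mul_sum]
    rw [Finset.sum_congr rfl this, Finset.sum_comm]
    refine Finset.sum_congr rfl fun j _ => ?_
    rw [Finset.sum_comm]
    refine Finset.sum_congr rfl fun k _ => ?_
    rw [Finset.mul_sum]
    refine Finset.sum_congr rfl fun p _ => by ring
  rw [hrhs]
  have hvdm : ∀ m : ℕ, ((Ring.choose (h₁ + h₂) m : ℤ) : A)
      = ∑ jk ∈ antidiagonal m,
          ((Ring.choose h₁ jk.1 : ℤ) : A) * ((Ring.choose h₂ jk.2 : ℤ) : A) := by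
    intro m
    rw [Ring.add_choose_eq m (Commute.all _ _)]
    push_cast
    rfl
  calc ∑ m ∈ range (N+1), ((Ring.choose (h₁+h₂) m : ℤ) : A) * coeff N ((QQ15 a) ^ m)
      = ∑ m ∈ range (N+1), ∑ jk ∈ antidiagonal m,
          ((Ring.choose h₁ jk.1 : ℤ) : A) * ((Ring.choose h₂ jk.2 : ℤ) : A) *
            ∑ p ∈ antidiagonal N, coeff p.1 ((QQ15 a) ^ jk.1) * coeff p.2 ((QQ15 a) ^ jk.2) := by
        refine Finset.sum_congr rfl fun m _ => ?_
        rw [hvdm m, Finset.sum_mul]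
        refine Finset.sum_congr rfl fun jk hjk => ?_
        rw [Finset.HasAntidiagonal.mem_antidiagonal] at hjk
        rw [← hjk, pow_add, PowerSeries.coeff_mul]
    _ = ∑ jk ∈ (range (N+1) ×ˢ range (N+1)).filter (fun p => p.1 + p.2 ≤ N),
          ((Ring.choose h₁ jk.1 : ℤ) : A) * ((Ring.choose h₂ jk.2 : ℤ) : A) *
            ∑ p ∈ antidiagonal N, coeff p.1 ((QQ15 a) ^ jk.1) * coeff p.2 ((QQ15 a) ^ jk.2) := by
        rw [← Finset.sum_biUnion]
        · congr 1
          ext p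
          simp only [Finset.mem_biUnion, Finset.mem_range, Finset.HasAntidiagonal.mem_antidiagonal, Finset.mem_filter,
            Finset.mem_product]
          constructor
          · rintro ⟨m, hm, rfl⟩; omega
          · intro hp; exact ⟨p.1 + p.2, by omega, rfl⟩
        · intro x _ y _ hxy
          simp only [Finset.disjoint_left, Finset.HasAntidiagonal.mem_antidiagonal]
          rintro p rfl h2
          exact hxy h2
    _ = ∑ jk ∈ range (N+1) ×ˢ range (N+1),
          ((Ring.choose h₁ jk.1 : ℤ) : A) * ((Ring.choose h₂ jk.2 : ℤ) : A) *
            ∑ p ∈ antidiagonal N, coeff p.1 ((QQ15 a) ^ jk.1) * coeff p.2 ((QQ15 a) ^ jk.2) := by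
        refine (Finset.sum_subset (Finset.filter_subset _ _) fun jk hjk hjk2 => ?_)
        rw [key jk.1 jk.2 (by simp at hjk2; omega), mul_zero]
    _ = ∑ j ∈ range (N+1), ∑ k ∈ range (N+1),
          ((Ring.choose h₁ j : ℤ) : A) * ((Ring.choose h₂ k : ℤ) : A) *
            ∑ p ∈ antidiagonal N, coeff p.1 ((QQ15 a) ^ j) * coeff p.2 ((QQ15 a) ^ k) := by
        rw [Finset.sum_product]

lemma S15_zero : S15 a 0 = 1 := by
  ext N
  rw [coeff_S15 a 0 (Nat.lt_succ_self N)]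
  rw [Finset.sum_eq_single 0]
  · simp
  · intro m _ hm
    rw [Ring.choose_zero_ite ℤ m, if_neg hm]
    simp
  · simp

lemma S15_one : S15 a 1 = 1 + QQ15 a := by
  ext N
  rw [coeff_S15 a 1 (show N < N + 2 by omega)]
  have h2 : (2 : ℕ) ≤ N + 2 := by omega
  rw [← Finset.sum_subset (Finset.range_subset_range.2 h2) (fun m _ hm => ?side)]
  · rw [Finset.sum_range_succ, Finset.sum_range_one]
    have c0 : Ring.choose (1 : ℤ) 0 = 1 := Ring.choose_zero_right 1
    have c1 : Ring.choose (1 : ℤ) 1 = 1 := Ring.choose_one_right 1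
    rw [c0, c1]
    simp [pow_zero, pow_one]
  case side =>
    have : Ring.choose (1 : ℤ) m = ((Nat.choose 1 m : ℕ) : ℤ) := by
      rw [show (1 : ℤ) = ((1 : ℕ) : ℤ) by norm_num, Ring.choose_natCast]
    rw [this, Nat.choose_eq_zero_of_lt (by simp at hm; omega)]
    simp

lemma S15_neg_mul (h : ℤ) : S15 a (-h) * S15 a h = 1 := by
  rw [← S15_mul, neg_add_cancel, S15_zero]

noncomputable def Sunit15 (h : ℤ) : (PowerSeries A)ˣ :=
  ⟨S15 a h, S15 a (-h), by rw [mul_comm]; exact S15_neg_mul a h, S15_neg_mul a h⟩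

lemma coe_upow_eq15 (u : (PowerSeries A)ˣ) (hu : (u : PowerSeries A) = 1 + QQ15 a) (h : ℤ) :
    ((u ^ h : (PowerSeries A)ˣ) : PowerSeries A) = S15 a h := by
  let F : Multiplicative ℤ →* (PowerSeries A)ˣ :=
    { toFun := fun m => Sunit15 a (Multiplicative.toAdd m)
      map_one' := by
        apply Units.ext
        show S15 a (Multiplicative.toAdd 1) = ((1 : (PowerSeries A)ˣ) : PowerSeries A)
        rw [toAdd_one, S15_zero, Units.val_one]
      map_mul' := fun x y => by
        apply Units.ext
        show S15 a (Multiplicative.toAdd (x * y)) = _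
        rw [toAdd_mul, S15_mul, Units.val_mul]
        rfl }
  have hF : F = zpowersHom _ u := by
    refine MonoidHom.ext_mint ?_
    show Sunit15 a 1 = u ^ (1:ℤ)
    rw [zpow_one]
    exact Units.ext (by simpa [hu, Sunit15] using S15_one a)
  have h2 := DFunLike.congr_fun hF (Multiplicative.ofAdd h)
  have h3 : Sunit15 a h = u ^ h := by simpa [F] using h2
  have h4 := congrArg (Units.val) h3
  simpa [Sunit15] using h4.symm

lemma coeff_Q15_pow (m N : ℕ) :
    coeff N ((QQ15 a) ^ m) =
      ∑ k ∈ (piAntidiag (univ : Finset (Fin l)) m).filter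
          (fun k => ∑ i : Fin l, ((i : ℕ) + 1) * k i = N),
        (Nat.multinomial Finset.univ k : A) * ∏ i : Fin l, a i ^ k i := by
  rw [QQ15, Finset.sum_pow_eq_sum_piAntidiag, map_sum, Finset.sum_filter]
  refine Finset.sum_congr rfl fun k hk => ?_
  have : ∀ i : Fin l, (PowerSeries.C (a i) * X ^ ((i:ℕ)+1)) ^ k i
      = PowerSeries.C (a i ^ k i) * X ^ (((i:ℕ)+1) * k i) := by
    intro i; rw [mul_pow, ← map_pow, ← pow_mul]
  simp_rw [this]
  rw [Finset.prod_mul_distrib, ← map_prod, Finset.prod_pow_eq_pow_sum]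
  rw [← map_natCast (PowerSeries.C (R := A)) (Nat.multinomial Finset.univ k),
    show (PowerSeries.C) ((Nat.multinomial Finset.univ k : A)) *
        ((PowerSeries.C) (∏ x : Fin l, a x ^ k x) *
          (X : PowerSeries A) ^ (∑ i : Fin l, ((i:ℕ)+1) * k i)) =
      (PowerSeries.C) ((Nat.multinomial Finset.univ k : A) * ∏ x : Fin l, a x ^ k x) *
        (X : PowerSeries A) ^ (∑ i : Fin l, ((i:ℕ)+1) * k i) from by rw [map_mul]; ring,
    PowerSeries.coeff_C_mul, PowerSeries.coeff_X_pow]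
  by_cases hN : ∑ i : Fin l, ((i:ℕ)+1) * k i = N
  · rw [if_pos hN, if_pos (by rw [hN]), mul_one]
  · rw [if_neg hN, if_neg (fun hc => hN hc.symm), mul_zero]

end Aux

/-- Let `A` be a commutative ring and
`P = 1 + ∑_{i=1}^{l} a_i·X^i ∈ A[[X]]` (a unit, since its constant term is `1`). Then for
every `h ∈ ℤ` and `N ∈ ℕ`, the coefficient of `X^N` in `P^h` equals the sum over all
tuples `(n_1,…,n_l) ∈ ℕ^l` with `∑ i·n_i = N` of
`C(h, n_1+⋯+n_l)·(n_1+⋯+n_l)!/(n_1!⋯n_l!)·∏ a_i^{n_i}`. (Any such tuple has all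
`n_i ≤ N`, so the tuples are encoded as functions `Fin l → Fin (N+1)`.) -/
theorem stmt_15 (A : Type*) [CommRing A] (l : ℕ) (hl : 1 ≤ l) (a : Fin l → A)
    (u : (PowerSeries A)ˣ)
    (hu : (u : PowerSeries A) =
      1 + ∑ i : Fin l, PowerSeries.C (a i) * (PowerSeries.X : PowerSeries A) ^ ((i : ℕ) + 1)) :
    ∀ (h : ℤ) (N : ℕ),
      PowerSeries.coeff N ((u ^ h : (PowerSeries A)ˣ) : PowerSeries A) =
        ∑ f ∈ Finset.univ.filter
            (fun f : Fin l → Fin (N + 1) => ∑ i : Fin l, ((i : ℕ) + 1) * (f i : ℕ) = N),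
          (intChoose h (∑ i : Fin l, (f i : ℕ)) : A) *
            (Nat.multinomial Finset.univ (fun i => (f i : ℕ)) : A) *
            ∏ i : Fin l, a i ^ (f i : ℕ) := by
  intro h N
  open Finset PowerSeries in
  simp only [intChoose_eq]
  rw [coe_upow_eq15 a u hu h, coeff_S15 a h (Nat.lt_succ_self N)]
  simp_rw [coeff_Q15_pow a, Finset.mul_sum]
  rw [Finset.sum_sigma']
  refine Finset.sum_nbij'
    (i := fun p (x : Fin l) => (⟨min (p.2 x) N, by omega⟩ : Fin (N+1)))
    (j := fun f => ⟨∑ i : Fin l, (f i : ℕ), fun x => (f x : ℕ)⟩) ?_ ?_ ?_ ?_ ?_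
  · rintro ⟨m, k⟩ hp
    simp only [Finset.mem_sigma, Finset.mem_range, Finset.mem_filter, Finset.mem_piAntidiag,
      Finset.mem_univ, true_and] at hp ⊢
    obtain ⟨hm, ⟨hsum, -⟩, hw⟩ := hp
    have hb : ∀ x : Fin l, k x ≤ N := by
      intro x
      calc k x ≤ ((x:ℕ)+1) * k x := Nat.le_mul_of_pos_left _ (Nat.succ_pos _)
        _ ≤ ∑ i : Fin l, ((i:ℕ)+1) * k i := Finset.single_le_sum
            (f := fun i : Fin l => ((i:ℕ)+1) * k i) (fun _ _ => Nat.zero_le _) (Finset.mem_univ x)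
        _ = N := hw
    have hv2 : ∀ x : Fin l, min (k x) N = k x := fun x => min_eq_left (hb x)
    refine Eq.trans (Finset.sum_congr rfl fun x _ => ?_) hw
    simp [hv2]
  · intro f hf
    simp only [Finset.mem_filter, Finset.mem_univ, true_and] at hf
    simp only [Finset.mem_sigma, Finset.mem_range, Finset.mem_filter, Finset.mem_piAntidiag]
    refine ⟨?_, ⟨⟨trivial, fun _ _ => Finset.mem_univ _⟩, hf⟩⟩
    have : ∑ i : Fin l, (f i : ℕ) ≤ ∑ i : Fin l, ((i:ℕ)+1) * (f i : ℕ) :=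
      Finset.sum_le_sum fun i _ => Nat.le_mul_of_pos_left _ (Nat.succ_pos _)
    omega
  · rintro ⟨m, k⟩ hp
    simp only [Finset.mem_sigma, Finset.mem_range, Finset.mem_filter, Finset.mem_piAntidiag,
      Finset.mem_univ, true_and] at hp
    obtain ⟨hm, ⟨hsum, -⟩, hw⟩ := hp
    have hb : ∀ x : Fin l, k x ≤ N := by
      intro x
      calc k x ≤ ((x:ℕ)+1) * k x := Nat.le_mul_of_pos_left _ (Nat.succ_pos _)
        _ ≤ ∑ i : Fin l, ((i:ℕ)+1) * k i := Finset.single_le_sum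
            (f := fun i : Fin l => ((i:ℕ)+1) * k i) (fun _ _ => Nat.zero_le _) (Finset.mem_univ x)
        _ = N := hw
    have hv2 : ∀ x : Fin l, min (k x) N = k x := fun x => min_eq_left (hb x)
    refine Sigma.ext ?_ ?_
    · simp only
      rw [← hsum]
      exact Finset.sum_congr rfl fun x _ => by simp [hv2]
    · simp only [heq_eq_eq]
      funext x
      simp [hv2]
  · intro f hf
    funext x
    have : (f x : ℕ) ≤ N := Nat.lt_succ_iff.mp (f x).isLt
    simp [Nat.min_eq_left this]
  · rintro ⟨m, k⟩ hp
    simp only [Finset.mem_sigma, Finset.mem_range, Finset.mem_filter, Finset.mem_piAntidiag,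
      Finset.mem_univ, true_and] at hp
    obtain ⟨hm, ⟨hsum, -⟩, hw⟩ := hp
    have hb : ∀ x : Fin l, k x ≤ N := by
      intro x
      calc k x ≤ ((x:ℕ)+1) * k x := Nat.le_mul_of_pos_left _ (Nat.succ_pos _)
        _ ≤ ∑ i : Fin l, ((i:ℕ)+1) * k i := Finset.single_le_sum
            (f := fun i : Fin l => ((i:ℕ)+1) * k i) (fun _ _ => Nat.zero_le _) (Finset.mem_univ x)
        _ = N := hw
    have hv2 : ∀ x : Fin l, min (k x) N = k x := fun x => min_eq_left (hb x)
    simp only [hv2]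
    rw [← hsum, mul_assoc]
end
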